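/- Let (Ω, ℱ, P) be a probability space and let Q, R : Ω → ℝ be independent, identically distributed measurable functions with 0 ≤ Q ≤ 1 almost surely. Then for every integer k ≥ 1 and every ε ∈ (0,1), E[s_k(Q·R)] ≥ 2 · E[s_k(Q) · 1_{Q ≤ ε}] · P(Q > ε). -/

import Mathlib

open MeasureTheory ProbabilityTheory Finset

/-- For `Q, R` i.i.d. with `0 ≤ Q ≤ 1` a.s., every `k ≥ 1` and `ε ∈ (0,1)`,
`E[s_k(QR)] ≥ 2 E[s_k(Q) 1_{Q ≤ ε}] P(Q > ε)`. -/
theorem sk_product_lower_bound {Ω : Type*} [MeasurableSpace Ω]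
    (P : Measure Ω) [IsProbabilityMeasure P]
    (Q R : Ω → ℝ) (hQ : Measurable Q) (hR : Measurable R)
    (hindep : IndepFun Q R P) (hid : IdentDistrib Q R P P)
    (hQ0 : ∀ᵐ ω ∂P, 0 ≤ Q ω) (hQ1 : ∀ᵐ ω ∂P, Q ω ≤ 1)
    (k : ℕ) (hk : 1 ≤ k) (ε : ℝ) (hε0 : 0 < ε) (hε1 : ε < 1) :
    (∫ ω, (∑ j ∈ Finset.range k, (1 - Q ω * R ω) ^ j) ∂P) ≥
      2 * (∫ ω, (if Q ω ≤ ε then ∑ j ∈ Finset.range k, (1 - Q ω) ^ j else 0) ∂P) *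
        (P {ω | ε < Q ω}).toReal := by
  -- bounds for R
  have hR0 : ∀ᵐ ω ∂P, 0 ≤ R ω := hid.ae_snd (p := fun x => 0 ≤ x)
    (measurableSet_le measurable_const measurable_id) hQ0
  have hR1 : ∀ᵐ ω ∂P, R ω ≤ 1 := hid.ae_snd (p := fun x => x ≤ 1)
    (measurableSet_le measurable_id measurable_const) hQ1
  set g : ℝ → ℝ := fun x => if x ≤ ε then ∑ j ∈ Finset.range k, (1 - x) ^ j else 0 with hgdef
  set h : ℝ → ℝ := fun x => if ε < x then 1 else 0 with hhdef
  have hgm : Measurable g :=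
    Measurable.ite (measurableSet_le measurable_id measurable_const)
      (Finset.measurable_sum _ fun j _ => (measurable_const.sub measurable_id).pow_const j)
      measurable_const
  have hhm : Measurable h :=
    Measurable.ite (measurableSet_lt measurable_const measurable_id)
      measurable_const measurable_const
  -- pointwise a.e. inequality
  have hpt : ∀ᵐ ω ∂P, g (Q ω) * h (R ω) + g (R ω) * h (Q ω) ≤
      ∑ j ∈ Finset.range k, (1 - Q ω * R ω) ^ j := by
    filter_upwards [hQ0, hQ1, hR0, hR1] with ω h0 h1 h0' h1'
    rcases le_or_gt (Q ω) ε with hq | hq <;> rcases le_or_gt (R ω) ε with hr | hr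
    · simp only [hgdef, hhdef, if_pos hq, if_pos hr, if_neg (not_lt.2 hq),
        if_neg (not_lt.2 hr), mul_zero, add_zero, zero_add]
      exact Finset.sum_nonneg fun j _ => pow_nonneg (by nlinarith) j
    · simp only [hgdef, hhdef, if_pos hq, if_pos hr, if_neg (not_lt.2 hq), mul_one, mul_zero,
        add_zero]
      refine Finset.sum_le_sum fun j _ => pow_le_pow_left₀ (by linarith) ?_ j
      have : Q ω * R ω ≤ Q ω := mul_le_of_le_one_right h0 h1'
      linarith
    · simp only [hgdef, hhdef, if_pos hr, if_pos hq, if_neg (not_le.2 hq),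
        if_neg (not_lt.2 hr), zero_mul, mul_one, zero_add, mul_zero]
      refine Finset.sum_le_sum fun j _ => pow_le_pow_left₀ (by linarith) ?_ j
      have : Q ω * R ω ≤ R ω := mul_le_of_le_one_left h0' h1
      linarith
    · simp only [hgdef, hhdef, if_neg (not_le.2 hq), if_neg (not_le.2 hr), zero_mul, add_zero]
      have : Q ω * R ω ≤ 1 := mul_le_one₀ h1 h0' h1'
      exact Finset.sum_nonneg fun j _ => pow_nonneg (by nlinarith) j
  -- integrability
  have hgbd : ∀ x : ℝ, 0 ≤ x → x ≤ 1 → |g x| ≤ (k : ℝ) := by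
    intro x hx0 hx1
    rcases le_or_gt x ε with hx | hx
    · simp only [hgdef, if_pos hx]
      rw [abs_of_nonneg (Finset.sum_nonneg fun j _ => pow_nonneg (by linarith) j)]
      calc ∑ j ∈ Finset.range k, (1 - x) ^ j ≤ ∑ j ∈ Finset.range k, (1:ℝ) :=
            Finset.sum_le_sum fun j _ => pow_le_one₀ (by linarith) (by linarith)
        _ = k := by simp
    · simp only [hgdef, if_neg (not_le.2 hx), abs_zero]
      exact_mod_cast Nat.cast_nonneg k
  have hhbd : ∀ x : ℝ, |h x| ≤ 1 := by
    intro x; simp only [hhdef]; split <;> simp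
  have I1 : Integrable (fun ω => ∑ j ∈ Finset.range k, (1 - Q ω * R ω) ^ j) P := by
    refine Integrable.mono' (integrable_const (k : ℝ))
      ((Finset.measurable_sum _ fun j _ =>
        (measurable_const.sub (hQ.mul hR)).pow_const j).aestronglyMeasurable) ?_
    filter_upwards [hQ0, hQ1, hR0, hR1] with ω h0 h1 h0' h1'
    have hqr0 : 0 ≤ Q ω * R ω := mul_nonneg h0 h0'
    have hqr1 : Q ω * R ω ≤ 1 := mul_le_one₀ h1 h0' h1'
    rw [Real.norm_eq_abs,
      abs_of_nonneg (Finset.sum_nonneg fun j _ => pow_nonneg (by linarith) j)]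
    calc ∑ j ∈ Finset.range k, (1 - Q ω * R ω) ^ j ≤ ∑ j ∈ Finset.range k, (1:ℝ) :=
          Finset.sum_le_sum fun j _ => pow_le_one₀ (by linarith) (by linarith)
      _ = k := by simp
  have I2 : Integrable (fun ω => g (Q ω) * h (R ω)) P := by
    refine Integrable.mono' (integrable_const (k : ℝ)) ((hgm.comp hQ).mul (hhm.comp hR)).aestronglyMeasurable ?_
    filter_upwards [hQ0, hQ1] with ω h0 h1
    rw [Real.norm_eq_abs, abs_mul]
    calc |g (Q ω)| * |h (R ω)| ≤ (k : ℝ) * 1 :=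
          mul_le_mul (hgbd _ h0 h1) (hhbd _) (abs_nonneg _) (Nat.cast_nonneg k)
      _ = k := mul_one _
  have I3 : Integrable (fun ω => g (R ω) * h (Q ω)) P := by
    refine Integrable.mono' (integrable_const (k : ℝ)) ((hgm.comp hR).mul (hhm.comp hQ)).aestronglyMeasurable ?_
    filter_upwards [hR0, hR1] with ω h0 h1
    rw [Real.norm_eq_abs, abs_mul]
    calc |g (R ω)| * |h (Q ω)| ≤ (k : ℝ) * 1 :=
          mul_le_mul (hgbd _ h0 h1) (hhbd _) (abs_nonneg _) (Nat.cast_nonneg k)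
      _ = k := mul_one _
  -- integral inequality
  have key : (∫ ω, (g (Q ω) * h (R ω) + g (R ω) * h (Q ω)) ∂P) ≤
      ∫ ω, (∑ j ∈ Finset.range k, (1 - Q ω * R ω) ^ j) ∂P :=
    integral_mono_ae (I2.add I3) I1 hpt
  rw [integral_add I2 I3] at key
  -- factor the products via independence
  have hfac1 : (∫ ω, g (Q ω) * h (R ω) ∂P) = (∫ ω, g (Q ω) ∂P) * ∫ ω, h (R ω) ∂P := by
    exact (hindep.comp hgm hhm).integral_fun_mul_eq_mul_integral ((hgm.comp hQ).aestronglyMeasurable)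
      ((hhm.comp hR).aestronglyMeasurable)
  have hfac2 : (∫ ω, g (R ω) * h (Q ω) ∂P) = (∫ ω, g (R ω) ∂P) * ∫ ω, h (Q ω) ∂P := by
    exact (hindep.symm.comp hgm hhm).integral_fun_mul_eq_mul_integral ((hgm.comp hR).aestronglyMeasurable)
      ((hhm.comp hQ).aestronglyMeasurable)
  -- identify pieces
  have hgQR : (∫ ω, g (R ω) ∂P) = ∫ ω, g (Q ω) ∂P := ((hid.comp hgm).integral_eq).symm
  have hhint : ∀ (X : Ω → ℝ), Measurable X →
      (∫ ω, h (X ω) ∂P) = (P {ω | ε < X ω}).toReal := by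
    intro X hX
    have hs : MeasurableSet {ω | ε < X ω} := measurableSet_lt measurable_const hX
    have : (fun ω => h (X ω)) = Set.indicator {ω | ε < X ω} (fun _ => (1:ℝ)) := by
      funext ω; simp [hhdef, Set.indicator_apply, Set.mem_setOf_eq]
    rw [this, integral_indicator_const (1:ℝ) hs, smul_eq_mul, mul_one, Measure.real_def]
  have hmeas_eq : P {ω | ε < R ω} = P {ω | ε < Q ω} := by
    have := hid.measure_mem_eq (measurableSet_Ioi (a := ε))
    simpa [Set.preimage, Set.mem_Ioi] using this.symm
  rw [hfac1, hfac2, hgQR, hhint R hR, hhint Q hQ, hmeas_eq] at key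
  have : (∫ ω, (if Q ω ≤ ε then ∑ j ∈ Finset.range k, (1 - Q ω) ^ j else 0) ∂P)
      = ∫ ω, g (Q ω) ∂P := rfl
  rw [ge_iff_le, this]
  nlinarith [key]
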